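/- Let A = GF(p) with p prime and k ∈ ℕ. If f : A^n → A has reduced polynomial of degree exactly k, then the smallest L-stable class containing f equals D_k, the class of all operations on A of degree at most k. -/

import Mathlib

/-- A finitary operation, with positive arity. -/
abbrev OpSig (A B : Type*) := Σ n : ℕ, (Fin (n + 1) → A) → B

/-- Composition of function classes. -/
def classComp {A B C : Type*} (F : Set (OpSig B C)) (K : Set (OpSig A B)) :
    Set (OpSig A C) :=
  { h | ∃ (n m : ℕ) (f : (Fin (n + 1) → B) → C)
      (g : Fin (n + 1) → (Fin (m + 1) → A) → B),
      (⟨n, f⟩ : OpSig B C) ∈ F ∧ (∀ i, (⟨m, g i⟩ : OpSig A B) ∈ K) ∧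
      h = ⟨m, fun a => f fun i => g i a⟩ }

/-- `f` has degree at most `k`: it is represented by a polynomial of
total degree at most `k`. -/
def HasDegLE {F : Type*} [CommSemiring F] {n : ℕ} (f : (Fin n → F) → F)
    (k : ℕ) : Prop :=
  ∃ q : MvPolynomial (Fin n) F, q.totalDegree ≤ k ∧ ∀ a, MvPolynomial.eval a q = f a

/-- The class `D_k` of operations of degree at most `k`. -/
def degClass (F : Type*) [CommSemiring F] (k : ℕ) : Set (OpSig F F) :=
  { g | HasDegLE g.2 k }

/-- The clone `L` of affine operations. -/
def affineClass (F : Type*) [CommSemiring F] : Set (OpSig F F) :=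
  degClass F 1

namespace LClosureAux

open MvPolynomial Finset

variable {R : Type*} [CommRing R]

/-! ### Combinatorial block lemma -/

lemma block_sum {ι : Type*} [DecidableEq ι] (y : ι → R) :
    ∀ (B : Finset ι) (b : ℕ), b ≤ B.card →
      (∑ S ∈ B.powerset, (-1 : R) ^ S.card * (∑ j ∈ S, y j) ^ b)
        = if b = B.card then (-1) ^ b * (Nat.factorial b : R) * ∏ j ∈ B, y j else 0 := by
  intro B
  induction B using Finset.induction_on with
  | empty =>
    intro b hb
    have hb0 : b = 0 := by simpa using hb
    subst hb0
    simp
  | @insert a s ha IH =>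
    intro b hb
    rw [Finset.sum_powerset_insert ha]
    have h2 : ∑ S ∈ s.powerset, (-1:R)^(insert a S).card * (∑ j ∈ insert a S, y j)^b
        = -∑ t ∈ Finset.range (b+1), (Nat.choose b t : R) * y a ^ t *
            ∑ S ∈ s.powerset, (-1:R)^S.card * (∑ j ∈ S, y j)^(b-t) := by
      calc ∑ S ∈ s.powerset, (-1:R)^(insert a S).card * (∑ j ∈ insert a S, y j)^b
          = ∑ S ∈ s.powerset, ∑ t ∈ Finset.range (b+1),
              -((Nat.choose b t : R) * y a ^ t * ((-1:R)^S.card * (∑ j ∈ S, y j)^(b-t))) := by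
            apply Finset.sum_congr rfl
            intro S hS
            have haS : a ∉ S := fun h => ha (Finset.mem_powerset.mp hS h)
            rw [Finset.sum_insert haS, Finset.card_insert_of_notMem haS, add_pow,
              Finset.mul_sum]
            exact Finset.sum_congr rfl fun t _ => by ring
        _ = -∑ t ∈ Finset.range (b+1), (Nat.choose b t : R) * y a ^ t *
              ∑ S ∈ s.powerset, (-1:R)^S.card * (∑ j ∈ S, y j)^(b-t) := by
            rw [Finset.sum_comm]
            simp only [Finset.sum_neg_distrib, Finset.mul_sum]
    rw [h2, Finset.sum_range_succ']
    have hcard : (insert a s).card = s.card + 1 := Finset.card_insert_of_notMem ha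
    simp only [Nat.choose_zero_right, Nat.cast_one, pow_zero, one_mul, Nat.sub_zero]
    have h3 : ∀ t ∈ Finset.range b,
        (Nat.choose b (t+1) : R) * y a ^ (t+1) *
            ∑ S ∈ s.powerset, (-1:R)^S.card * (∑ j ∈ S, y j)^(b-(t+1))
          = (Nat.choose b (t+1) : R) * y a ^ (t+1) *
            (if b - (t+1) = s.card then (-1:R) ^ (b-(t+1)) * (Nat.factorial (b-(t+1)) : R)
              * ∏ j ∈ s, y j else 0) := by
      intro t ht
      rw [IH _ (by omega)]
    rw [Finset.sum_congr rfl h3]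
    by_cases hbc : b = s.card + 1
    · rw [if_pos (by omega)]
      have hb0 : 0 ∈ Finset.range b := Finset.mem_range.mpr (by omega)
      rw [Finset.sum_eq_single_of_mem 0 hb0 (by
        intro t htm ht0
        have := Finset.mem_range.mp htm
        rw [if_neg (by omega), mul_zero])]
      rw [if_pos (by omega)]
      rw [Finset.prod_insert ha]
      have hfac : (b : ℕ) * Nat.factorial (b-1) = Nat.factorial b := by
        have := Nat.mul_factorial_pred (show b ≠ 0 by omega)
        omega
      have hsgn : (-1:R)^b = (-1:R)^(b-1) * (-1) := by
        rw [← pow_succ]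
        congr 1
        omega
      have h01 : b - (0+1) = s.card := by omega
      rw [h01]
      have hsc : s.card = b - 1 := by omega
      rw [hsc] at *
      rw [Nat.choose_one_right]
      rw [hsgn]
      have : ((Nat.factorial b : ℕ) : R) = (b:R) * (Nat.factorial (b-1) : R) := by
        rw [← hfac]; push_cast; ring
      rw [this]
      ring
    · rw [if_neg (by omega)]
      have : ∀ t ∈ Finset.range b,
          (Nat.choose b (t+1) : R) * y a ^ (t+1) *
            (if b - (t+1) = s.card then (-1:R) ^ (b-(t+1)) * (Nat.factorial (b-(t+1)) : R)
              * ∏ j ∈ s, y j else 0) = 0 := by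
        intro t ht
        have := Finset.mem_range.mp ht
        rw [if_neg (by omega), mul_zero]
      rw [Finset.sum_congr rfl this, Finset.sum_const_zero]
      ring

lemma sum_powerset_union_disjoint {ι : Type*} [DecidableEq ι] {M : Type*} [AddCommMonoid M]
    (A C : Finset ι) (h : Disjoint A C) (f : Finset ι → M) :
    ∑ T ∈ (A ∪ C).powerset, f T
      = ∑ T1 ∈ A.powerset, ∑ T2 ∈ C.powerset, f (T1 ∪ T2) := by
  induction A using Finset.induction_on generalizing f with
  | empty => simp
  | @insert a s ha IH =>
    have hac : a ∉ C := Finset.disjoint_left.mp h (Finset.mem_insert_self a s)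
    have hsC : Disjoint s C := Finset.disjoint_of_subset_left (Finset.subset_insert a s) h
    have h1 : insert a s ∪ C = insert a (s ∪ C) := by
      ext x; simp [Finset.mem_insert, Finset.mem_union, or_assoc]
    rw [h1, Finset.sum_powerset_insert (by simp [ha, hac]), IH hsC _,
      Finset.sum_powerset_insert ha]
    congr 1
    rw [IH hsC]
    apply Finset.sum_congr rfl
    intro T1 _
    apply Finset.sum_congr rfl
    intro T2 _
    rw [Finset.insert_union]

lemma sum_powerset_prod {ι κ : Type*} [DecidableEq ι] [DecidableEq κ]
    (B : κ → Finset ι) (s : Finset κ)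
    (hdisj : ∀ i ∈ s, ∀ j ∈ s, i ≠ j → Disjoint (B i) (B j))
    (φ : κ → Finset ι → R) :
    ∑ T ∈ (s.biUnion B).powerset, ∏ i ∈ s, φ i (T ∩ B i)
      = ∏ i ∈ s, ∑ S ∈ (B i).powerset, φ i S := by
  induction s using Finset.induction_on with
  | empty => simp
  | @insert a s ha IH =>
    have hdisj' : ∀ i ∈ s, ∀ j ∈ s, i ≠ j → Disjoint (B i) (B j) := fun i hi j hj =>
      hdisj i (Finset.mem_insert_of_mem hi) j (Finset.mem_insert_of_mem hj)
    have hBa : Disjoint (B a) (s.biUnion B) := by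
      rw [Finset.disjoint_biUnion_right]
      intro j hj
      exact hdisj a (Finset.mem_insert_self a s) j (Finset.mem_insert_of_mem hj)
        (fun h => ha (h ▸ hj))
    rw [Finset.biUnion_insert, sum_powerset_union_disjoint _ _ hBa]
    have key : ∀ T1 ∈ (B a).powerset, ∀ T2 ∈ (s.biUnion B).powerset,
        ∏ i ∈ insert a s, φ i ((T1 ∪ T2) ∩ B i)
          = φ a T1 * ∏ i ∈ s, φ i (T2 ∩ B i) := by
      intro T1 hT1 T2 hT2
      rw [Finset.mem_powerset] at hT1 hT2
      rw [Finset.prod_insert ha]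
      congr 1
      · congr 1
        have h1 : T1 ∩ B a = T1 := Finset.inter_eq_left.mpr hT1
        have h2 : T2 ∩ B a = ∅ := by
          apply Finset.disjoint_iff_inter_eq_empty.mp
          exact Finset.disjoint_of_subset_left hT2 hBa.symm
        rw [Finset.union_inter_distrib_right, h1, h2, Finset.union_empty]
      · apply Finset.prod_congr rfl
        intro i hi
        congr 1
        have hdia : Disjoint (B a) (B i) :=
          hdisj a (Finset.mem_insert_self a s) i (Finset.mem_insert_of_mem hi)
            (fun h => ha (h ▸ hi))
        have h1 : T1 ∩ B i = ∅ := by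
          apply Finset.disjoint_iff_inter_eq_empty.mp
          exact Finset.disjoint_of_subset_left hT1 hdia
        rw [Finset.union_inter_distrib_right, h1, Finset.empty_union]
    calc ∑ T1 ∈ (B a).powerset, ∑ T2 ∈ (s.biUnion B).powerset,
            ∏ i ∈ insert a s, φ i ((T1 ∪ T2) ∩ B i)
        = ∑ T1 ∈ (B a).powerset, ∑ T2 ∈ (s.biUnion B).powerset,
            φ a T1 * ∏ i ∈ s, φ i (T2 ∩ B i) := by
          apply Finset.sum_congr rfl
          intro T1 hT1
          exact Finset.sum_congr rfl fun T2 hT2 => key T1 hT1 T2 hT2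
      _ = (∑ T1 ∈ (B a).powerset, φ a T1) * ∑ T2 ∈ (s.biUnion B).powerset,
            ∏ i ∈ s, φ i (T2 ∩ B i) := by
          rw [Finset.sum_mul]
          exact Finset.sum_congr rfl fun T1 _ => by rw [Finset.mul_sum]
      _ = _ := by rw [IH hdisj', Finset.prod_insert ha]

/-! ### Master polarization identity -/

lemma master {τ ι : Type*} [Fintype τ] [Fintype ι] [DecidableEq τ] [DecidableEq ι]
    (q : MvPolynomial τ R) (e : ι → τ)
    (hk : q.totalDegree ≤ Fintype.card ι) (y : ι → R) :
    ∑ T ∈ (Finset.univ : Finset ι).powerset,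
        (-1 : R) ^ T.card *
          MvPolynomial.eval (fun i => ∑ j ∈ T.filter (fun j => e j = i), y j) q
      = (-1) ^ (Fintype.card ι)
          * MvPolynomial.coeff
              (Finsupp.equivFunOnFinite.symm
                (fun i => (Finset.univ.filter (fun j => e j = i)).card)) q
          * ((∏ i, Nat.factorial (Finset.univ.filter (fun j => e j = i)).card : ℕ) : R)
          * ∏ j, y j := by
  classical
  set B : τ → Finset ι := fun i => Finset.univ.filter (fun j => e j = i) with hB
  set a : τ → ℕ := fun i => (B i).card with ha
  set d₀ : τ →₀ ℕ := Finsupp.equivFunOnFinite.symm a with hd₀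
  have hd₀i : ∀ i, d₀ i = a i := fun i => rfl
  have hdisj : ∀ i ∈ (univ : Finset τ), ∀ j ∈ univ, i ≠ j → Disjoint (B i) (B j) := by
    intro i _ j _ hij
    rw [Finset.disjoint_left]
    intro x hx hx'
    rw [hB] at hx hx'
    simp only [Finset.mem_filter] at hx hx'
    exact hij (hx.2 ▸ hx'.2 ▸ rfl)
  have hbiU : (univ : Finset τ).biUnion B = (univ : Finset ι) := by
    ext j
    simp [hB]
  have hsum_a : ∑ i, a i = Fintype.card ι := by
    rw [← Finset.card_univ, Finset.card_eq_sum_card_fiberwise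
      (f := e) (t := (univ : Finset τ)) (fun x _ => Finset.mem_univ (e x))]
  have hfib : ∀ (T : Finset ι) (i : τ), T.filter (fun j => e j = i) = T ∩ B i := by
    intro T i
    ext x
    simp [hB, Finset.mem_filter, Finset.mem_inter, and_comm]
  have hcardT : ∀ T : Finset ι, T.card = ∑ i, (T ∩ B i).card := by
    intro T
    rw [Finset.card_eq_sum_card_fiberwise
      (f := e) (t := (univ : Finset τ)) (fun x _ => Finset.mem_univ (e x))]
    exact Finset.sum_congr rfl fun i _ => by rw [hfib]
  calc ∑ T ∈ (Finset.univ : Finset ι).powerset,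
        (-1 : R) ^ T.card *
          MvPolynomial.eval (fun i => ∑ j ∈ T.filter (fun j => e j = i), y j) q
      = ∑ T ∈ (Finset.univ : Finset ι).powerset, ∑ d ∈ q.support,
          coeff d q * ∏ i, ((-1 : R) ^ ((T ∩ B i).card) * (∑ j ∈ T ∩ B i, y j) ^ d i) := by
        apply Finset.sum_congr rfl
        intro T _
        rw [eval_eq', Finset.mul_sum]
        apply Finset.sum_congr rfl
        intro d _
        rw [Finset.prod_mul_distrib, Finset.prod_pow_eq_pow_sum, ← hcardT T]
        have : ∀ i, (∑ j ∈ T.filter (fun j => e j = i), y j) = ∑ j ∈ T ∩ B i, y j :=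
          fun i => by rw [hfib]
        simp only [this]
        ring
    _ = ∑ d ∈ q.support, coeff d q *
          ∑ T ∈ (Finset.univ : Finset ι).powerset,
            ∏ i, ((-1 : R) ^ ((T ∩ B i).card) * (∑ j ∈ T ∩ B i, y j) ^ d i) := by
        rw [Finset.sum_comm]
        exact Finset.sum_congr rfl fun d _ => by rw [Finset.mul_sum]
    _ = ∑ d ∈ q.support, coeff d q *
          ∏ i, ∑ S ∈ (B i).powerset, ((-1 : R) ^ S.card * (∑ j ∈ S, y j) ^ d i) := by
        apply Finset.sum_congr rfl
        intro d _
        rw [← hbiU, sum_powerset_prod B univ hdisj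
          (fun i S => (-1 : R) ^ S.card * (∑ j ∈ S, y j) ^ d i)]
    _ = (-1) ^ (Fintype.card ι) * coeff d₀ q
          * ((∏ i, Nat.factorial (a i) : ℕ) : R) * ∏ j, y j := by
        rw [Finset.sum_eq_single d₀]
        · by_cases hmem : d₀ ∈ q.support
          · have : ∀ i ∈ (univ : Finset τ),
                (∑ S ∈ (B i).powerset, ((-1 : R) ^ S.card * (∑ j ∈ S, y j) ^ d₀ i))
                  = (-1 : R) ^ (a i) * (Nat.factorial (a i) : R) * ∏ j ∈ B i, y j := by
              intro i _
              rw [hd₀i, block_sum y (B i) (a i) le_rfl, if_pos rfl]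
            rw [Finset.prod_congr rfl this, Finset.prod_mul_distrib,
              Finset.prod_mul_distrib, Finset.prod_pow_eq_pow_sum, hsum_a,
              ← Finset.prod_biUnion (hdisj), hbiU]
            push_cast
            ring
          · rw [MvPolynomial.notMem_support_iff.mp hmem]
            ring
        · intro d hd hne
          have hdsum : ∑ i, d i ≤ ∑ i, a i := by
            rw [hsum_a]
            calc ∑ i, d i = d.sum fun _ m => m :=
                (Finsupp.sum_fintype d (fun _ m => m) (fun _ => rfl)).symm
              _ ≤ q.totalDegree := le_totalDegree hd
              _ ≤ Fintype.card ι := hk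
          have hexists : ∃ i, d i < a i := by
            by_contra hcon
            push_neg at hcon
            have hall : ∀ i ∈ (univ : Finset τ), d i = a i := by
              have hle : ∀ i ∈ (univ : Finset τ), a i ≤ d i := fun i _ => hcon i
              intro i hi
              exact ((Finset.sum_eq_sum_iff_of_le hle).mp
                (le_antisymm (Finset.sum_le_sum hle) hdsum)) i hi |>.symm
            apply hne
            ext i
            rw [hall i (Finset.mem_univ i), hd₀i]
          obtain ⟨i0, hi0⟩ := hexists
          rw [Finset.prod_eq_zero (Finset.mem_univ i0), mul_zero]
          rw [block_sum y (B i0) (d i0) (le_of_lt hi0), if_neg (Nat.ne_of_lt hi0)]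
        · intro h
          rw [MvPolynomial.notMem_support_iff.mp h]
          ring

/-- Existence of a map with prescribed fiber cardinalities. -/
lemma exists_fiber_map {τ : Type*} [Fintype τ] [DecidableEq τ] (a : τ → ℕ) (k : ℕ)
    (hk : ∑ i, a i = k) :
    ∃ e : Fin k → τ, ∀ i, (Finset.univ.filter (fun j => e j = i)).card = a i := by
  have hcard : Fintype.card (Σ i : τ, Fin (a i)) = k := by
    simp [hk]
  obtain ⟨E⟩ : Nonempty (Fin k ≃ Σ i : τ, Fin (a i)) :=
    ⟨Fintype.equivOfCardEq (by simp [hcard])⟩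
  refine ⟨fun j => (E j).1, fun i => ?_⟩
  rw [← Fintype.card_subtype]
  have e2 : {j : Fin k // (E j).1 = i} ≃ {s : Σ t : τ, Fin (a t) // s.1 = i} :=
    E.subtypeEquiv (fun j => Iff.rfl)
  have e3 : {s : Σ t : τ, Fin (a t) // s.1 = i} ≃ Fin (a i) :=
    { toFun := fun s => Fin.cast (congrArg a s.2) s.1.2
      invFun := fun x => ⟨⟨i, x⟩, rfl⟩
      left_inv := by rintro ⟨⟨t, x⟩, h⟩; dsimp only at h; subst h; rfl
      right_inv := fun x => rfl }
  rw [Fintype.card_congr (e2.trans e3), Fintype.card_fin]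

/-! ### Affine toolkit -/

lemma totalDegree_X_le {n : ℕ} (i : Fin n) : (X i : MvPolynomial (Fin n) R).totalDegree ≤ 1 := by
  rw [X]
  refine le_trans (totalDegree_monomial_le _ _) ?_
  simp

lemma proj_affine {n : ℕ} (i : Fin n) : HasDegLE (fun y : Fin n → R => y i) 1 :=
  ⟨X i, totalDegree_X_le i, fun a => by simp⟩

lemma const_affine {n : ℕ} (c : R) : HasDegLE (fun _ : Fin n → R => c) 1 :=
  ⟨C c, le_trans (by rw [totalDegree_C]) (Nat.zero_le 1), fun a => by simp⟩

lemma sum_affine {n : ℕ} (S : Finset (Fin n)) :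
    HasDegLE (fun y : Fin n → R => ∑ j ∈ S, y j) 1 := by
  refine ⟨∑ j ∈ S, X j, ?_, fun a => by simp⟩
  refine le_trans (totalDegree_finset_sum _ _) (Finset.sup_le fun j _ => ?_)
  exact totalDegree_X_le j

lemma hasDegLE_comp {n m k l : ℕ} {g : (Fin (n+1) → R) → R} (hg : HasDegLE g k)
    {σ : Fin (n+1) → (Fin (m+1) → R) → R} (hσ : ∀ i, HasDegLE (σ i) l) :
    HasDegLE (fun y => g fun i => σ i y) (k * l) := by
  obtain ⟨q, hq1, hq2⟩ := hg
  choose r hr1 hr2 using hσ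
  refine ⟨bind₁ r q, ?_, ?_⟩
  · conv_lhs => rw [as_sum q]
    rw [map_sum]
    refine le_trans (totalDegree_finset_sum _ _) (Finset.sup_le fun d hd => ?_)
    rw [bind₁_monomial]
    refine le_trans (totalDegree_mul _ _) ?_
    rw [totalDegree_C, zero_add]
    refine le_trans (totalDegree_finset_prod _ _) ?_
    calc ∑ i ∈ d.support, ((r i) ^ d i).totalDegree
        ≤ ∑ i ∈ d.support, d i * l :=
          Finset.sum_le_sum fun i _ => le_trans (totalDegree_pow _ _)
            (Nat.mul_le_mul_left _ (hr1 i))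
      _ = (d.sum fun _ e => e) * l := by rw [Finsupp.sum, Finset.sum_mul]
      _ ≤ k * l := Nat.mul_le_mul_right _ (le_trans (le_totalDegree hd) hq1)
  · intro y
    have : eval y (bind₁ r q) = eval (fun i => eval y (r i)) q :=
      eval₂Hom_bind₁ (RingHom.id R) y r q
    rw [this]
    rw [hq2]
    congr 1
    funext i
    exact hr2 i y

/-! ### Closure machinery -/

variable {K : Set (OpSig R R)}

lemma subst_mem (hK1 : classComp K (affineClass R) ⊆ K)
    {n m : ℕ} {g : (Fin (n+1) → R) → R} (hg : (⟨n, g⟩ : OpSig R R) ∈ K)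
    (σ : Fin (n+1) → (Fin (m+1) → R) → R) (hσ : ∀ i, HasDegLE (σ i) 1) :
    (⟨m, fun y => g (fun i => σ i y)⟩ : OpSig R R) ∈ K :=
  hK1 ⟨n, m, g, σ, hg, fun i => hσ i, rfl⟩

lemma affine_comb_mem (hK2 : classComp (affineClass R) K ⊆ K)
    {r m : ℕ} (g : Fin (r+1) → (Fin (m+1) → R) → R)
    (hg : ∀ t, (⟨m, g t⟩ : OpSig R R) ∈ K) (c : Fin (r+1) → R) (d : R) :
    (⟨m, fun y => (∑ t, c t * g t y) + d⟩ : OpSig R R) ∈ K := by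
  have houter : HasDegLE (fun v : Fin (r+1) → R => (∑ t, c t * v t) + d) 1 := by
    refine ⟨(∑ t, MvPolynomial.C (c t) * MvPolynomial.X t) + MvPolynomial.C d, ?_, ?_⟩
    · refine le_trans (totalDegree_add _ _) (max_le ?_ ?_)
      · refine le_trans (totalDegree_finset_sum _ _) (Finset.sup_le fun j _ => ?_)
        refine le_trans (totalDegree_mul _ _) ?_
        rw [totalDegree_C, zero_add]
        exact totalDegree_X_le j
      · rw [totalDegree_C]; exact Nat.zero_le 1
    · intro v
      simp
  exact hK2 ⟨r, m, _, g, houter, hg, rfl⟩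

lemma affine_comb_mem' (hK2 : classComp (affineClass R) K ⊆ K)
    {ι : Type*} [Fintype ι] [Nonempty ι] {m : ℕ}
    (g : ι → (Fin (m+1) → R) → R) (hg : ∀ t, (⟨m, g t⟩ : OpSig R R) ∈ K)
    (c : ι → R) (d : R) :
    (⟨m, fun y => (∑ t, c t * g t y) + d⟩ : OpSig R R) ∈ K := by
  obtain ⟨r, hr⟩ : ∃ r, Fintype.card ι = r + 1 :=
    ⟨Fintype.card ι - 1, (Nat.succ_pred_eq_of_pos Fintype.card_pos).symm⟩
  have E : ι ≃ Fin (r+1) := (Fintype.equivFin ι).trans (finCongr hr)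
  have heq : (fun y : Fin (m+1) → R => (∑ t : ι, c t * g t y) + d)
      = (fun y => (∑ t : Fin (r+1), c (E.symm t) * g (E.symm t) y) + d) := by
    funext y
    rw [Equiv.sum_comp E.symm (fun i => c i * g i y)]
  rw [show (⟨m, fun y : Fin (m+1) → R => (∑ t : ι, c t * g t y) + d⟩ : OpSig R R)
      = ⟨m, fun y => (∑ t : Fin (r+1), c (E.symm t) * g (E.symm t) y) + d⟩ from
    congrArg (Sigma.mk m) heq]
  exact affine_comb_mem hK2 _ (fun t => hg _) _ d

lemma const_mem (hK1 : classComp K (affineClass R) ⊆ K)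
    (hK2 : classComp (affineClass R) K ⊆ K)
    {n : ℕ} {f : (Fin (n+1) → R) → R} (hf : (⟨n, f⟩ : OpSig R R) ∈ K)
    (m : ℕ) (c : R) :
    (⟨m, fun _ => c⟩ : OpSig R R) ∈ K := by
  have h1 : (⟨m, fun y : Fin (m+1) → R => f (fun _ => y 0)⟩ : OpSig R R) ∈ K :=
    subst_mem hK1 hf _ (fun i => proj_affine 0)
  have := affine_comb_mem hK2 (r := 0) (fun _ y => f (fun _ => y 0)) (fun _ => h1)
    (fun _ => 0) c
  simpa using this

/-! ### Exponent reduction over `ZMod p` -/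

section ZModP

variable {p : ℕ} [Fact p.Prime]

def expRed (p t : ℕ) : ℕ := if t = 0 then 0 else (t - 1) % (p - 1) + 1

lemma expRed_le (t : ℕ) : expRed p t ≤ t := by
  unfold expRed
  split
  · omega
  · have h1 : 1 ≤ p - 1 := by have := (Fact.out : p.Prime).two_le; omega
    have := Nat.mod_le (t - 1) (p - 1)
    omega

lemma expRed_le_pred (t : ℕ) : expRed p t ≤ p - 1 := by
  unfold expRed
  split
  · omega
  · have h1 : 1 ≤ p - 1 := by have := (Fact.out : p.Prime).two_le; omega
    have := Nat.mod_lt (t - 1) (show 0 < p - 1 by omega)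
    omega

lemma pow_expRed (x : ZMod p) (t : ℕ) : x ^ expRed p t = x ^ t := by
  rcases Nat.eq_zero_or_pos t with h | h
  · subst h; rfl
  · rw [expRed, if_neg (by omega)]
    by_cases hx : x = 0
    · subst hx
      rw [zero_pow (by omega), zero_pow (by omega)]
    · have h1 : x ^ (p - 1) = 1 := ZMod.pow_card_sub_one_eq_one hx
      have h2 : (t - 1) % (p - 1) + (p - 1) * ((t - 1) / (p - 1)) = t - 1 :=
        Nat.mod_add_div _ _
      conv_rhs => rw [show t = (t - 1) % (p - 1) + 1 + (p - 1) * ((t - 1) / (p - 1)) by omega,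
        pow_add, pow_mul, h1, one_pow, mul_one]

variable {N : ℕ}

noncomputable def redPoly (p : ℕ) [Fact p.Prime] (q : MvPolynomial (Fin N) (ZMod p)) :
    MvPolynomial (Fin N) (ZMod p) :=
  ∑ d ∈ q.support, monomial (Finsupp.mapRange (expRed p) (by simp [expRed]) d) (coeff d q)

lemma eval_redPoly (q : MvPolynomial (Fin N) (ZMod p)) (y : Fin N → ZMod p) :
    eval y (redPoly p q) = eval y q := by
  rw [redPoly, map_sum]
  conv_rhs => rw [as_sum q, map_sum]
  apply Finset.sum_congr rfl
  intro d _
  rw [eval_monomial, eval_monomial]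
  congr 1
  rw [Finsupp.prod_mapRange_index (by simp)]
  apply Finsupp.prod_congr
  intro i _
  rw [pow_expRed]

lemma totalDegree_redPoly_le (q : MvPolynomial (Fin N) (ZMod p)) :
    (redPoly p q).totalDegree ≤ q.totalDegree := by
  rw [redPoly]
  refine le_trans (totalDegree_finset_sum _ _) (Finset.sup_le fun d hd => ?_)
  refine le_trans (totalDegree_monomial_le _ _) ?_
  refine le_trans ?_ (le_totalDegree hd)
  rw [Finsupp.sum_mapRange_index (by simp)]
  rw [Finsupp.sum, Finsupp.sum]
  exact Finset.sum_le_sum fun i _ => expRed_le (d i)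

lemma redPoly_exp_le (q : MvPolynomial (Fin N) (ZMod p)) :
    ∀ d ∈ (redPoly p q).support, ∀ i, d i ≤ p - 1 := by
  intro d hd i
  have := MvPolynomial.support_sum (s := q.support)
    (f := fun d => monomial (Finsupp.mapRange (expRed p) (by simp [expRed]) d) (coeff d q)) hd
  rw [Finset.mem_biUnion] at this
  obtain ⟨d', _, hd'⟩ := this
  have := support_monomial_subset hd'
  rw [Finset.mem_singleton] at this
  subst this
  rw [Finsupp.mapRange_apply]
  exact expRed_le_pred _

/-! ### Main construction -/

variable {Kp : Set (OpSig (ZMod p) (ZMod p))}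

lemma prod_mem (hK1 : classComp Kp (affineClass (ZMod p)) ⊆ Kp)
    (hK2 : classComp (affineClass (ZMod p)) Kp ⊆ Kp)
    {n k' : ℕ} {f : (Fin (n+1) → ZMod p) → ZMod p}
    (hf : (⟨n, f⟩ : OpSig (ZMod p) (ZMod p)) ∈ Kp)
    (q : MvPolynomial (Fin (n+1)) (ZMod p)) (hq : ∀ y, eval y q = f y)
    (hdeg : q.totalDegree ≤ k' + 1)
    (d₀ : Fin (n+1) →₀ ℕ) (hd₀ : d₀ ∈ q.support)
    (hsum : (d₀.sum fun _ e => e) = k' + 1)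
    (hred : ∀ i, d₀ i ≤ p - 1) :
    (⟨k', fun y : Fin (k'+1) → ZMod p => ∏ j, y j⟩ : OpSig (ZMod p) (ZMod p)) ∈ Kp := by
  classical
  have hsum' : ∑ i, d₀ i = k' + 1 := by
    rw [← hsum]; exact (Finsupp.sum_fintype d₀ (fun _ m => m) (fun _ => rfl)).symm
  obtain ⟨e, he⟩ := exists_fiber_map (fun i => d₀ i) (k' + 1) hsum'
  have hd₀eq : (Finsupp.equivFunOnFinite.symm
      (fun i => (Finset.univ.filter (fun j => e j = i)).card)) = d₀ := by
    ext i
    simp [he i]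
  set Nfac : ℕ := ∏ i, Nat.factorial (Finset.univ.filter (fun j => e j = i)).card with hN
  set c : ZMod p := (-1) ^ (k' + 1) * coeff d₀ q * (Nfac : ZMod p) with hc
  have hcne : c ≠ 0 := by
    have h1 : ((-1 : ZMod p)) ^ (k'+1) ≠ 0 := pow_ne_zero _ (neg_ne_zero.mpr one_ne_zero)
    have h2 : coeff d₀ q ≠ 0 := mem_support_iff.mp hd₀
    have h3 : (Nfac : ZMod p) ≠ 0 := by
      haveI : NeZero p := ⟨(Fact.out : p.Prime).ne_zero⟩
      rw [Ne, ZMod.natCast_eq_zero_iff]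
      intro hdvd
      obtain ⟨i, _, hdvd'⟩ :=
        ((Nat.Prime.prime (Fact.out : p.Prime)).dvd_finset_prod_iff _).mp hdvd
      rw [he i] at hdvd'
      have hle := ((Fact.out : p.Prime).dvd_factorial).mp hdvd'
      have := hred i
      have := (Fact.out : p.Prime).two_le
      omega
    exact mul_ne_zero (mul_ne_zero h1 h2) h3
  have hmaster : ∀ y : Fin (k'+1) → ZMod p,
      ∑ T : Finset (Fin (k'+1)),
        (-1 : ZMod p) ^ T.card * eval (fun i => ∑ j ∈ T.filter (fun j => e j = i), y j) q
        = c * ∏ j, y j := by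
    intro y
    have hm := master q e (by rw [Fintype.card_fin]; exact hdeg) y
    rw [Finset.powerset_univ] at hm
    rw [hm, hd₀eq, Fintype.card_fin, hc, hN]
  have hg : ∀ T : Finset (Fin (k'+1)),
      (⟨k', fun y : Fin (k'+1) → ZMod p =>
        f (fun i => ∑ j ∈ T.filter (fun j => e j = i), y j)⟩ : OpSig (ZMod p) (ZMod p)) ∈ Kp :=
    fun T => subst_mem hK1 hf _ (fun i => sum_affine _)
  have hmem := affine_comb_mem' (R := ZMod p) hK2 (ι := Finset (Fin (k'+1)))
    (fun T y => f (fun i => ∑ j ∈ T.filter (fun j => e j = i), y j)) hg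
    (fun T => c⁻¹ * (-1) ^ T.card) 0
  have heq : (fun y : Fin (k'+1) → ZMod p =>
      (∑ T : Finset (Fin (k'+1)), (c⁻¹ * (-1) ^ T.card) *
        f (fun i => ∑ j ∈ T.filter (fun j => e j = i), y j)) + 0)
      = fun y : Fin (k'+1) → ZMod p => ∏ j, y j := by
    funext y
    rw [add_zero]
    calc (∑ T : Finset (Fin (k'+1)), (c⁻¹ * (-1) ^ T.card) *
          f (fun i => ∑ j ∈ T.filter (fun j => e j = i), y j))
        = c⁻¹ * ∑ T : Finset (Fin (k'+1)), (-1 : ZMod p) ^ T.card *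
            eval (fun i => ∑ j ∈ T.filter (fun j => e j = i), y j) q := by
          rw [Finset.mul_sum]
          exact Finset.sum_congr rfl fun T _ => by rw [hq]; ring
      _ = c⁻¹ * (c * ∏ j, y j) := by rw [hmaster y]
      _ = ∏ j, y j := by rw [← mul_assoc, inv_mul_cancel₀ hcne, one_mul]
  rw [← heq]
  exact hmem

lemma monomial_mem (hK1 : classComp Kp (affineClass (ZMod p)) ⊆ Kp)
    {k' : ℕ}
    (hP : (⟨k', fun y : Fin (k'+1) → ZMod p => ∏ j, y j⟩ : OpSig (ZMod p) (ZMod p)) ∈ Kp)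
    {m : ℕ} (d : Fin (m+1) → ℕ) (hd : ∑ i, d i ≤ k' + 1) :
    (⟨m, fun y : Fin (m+1) → ZMod p => ∏ i, y i ^ d i⟩ : OpSig (ZMod p) (ZMod p)) ∈ Kp := by
  classical
  set j : ℕ := ∑ i, d i with hj
  set b : Fin (m+2) → ℕ := Fin.snoc d (k' + 1 - j) with hb
  have hbsum : ∑ v, b v = k' + 1 := by
    rw [Fin.sum_univ_castSucc]
    simp only [hb, Fin.snoc_castSucc, Fin.snoc_last]
    omega
  obtain ⟨e2, he2⟩ := exists_fiber_map b (k' + 1) hbsum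
  have hσ0 : ∀ v : Fin (m+2), HasDegLE
      (fun y : Fin (m+1) → ZMod p => (Fin.snoc y (1 : ZMod p) : Fin (m + 2) → ZMod p) v) 1 := by
    intro v
    induction v using Fin.lastCases with
    | last => simp only [Fin.snoc_last]; exact const_affine 1
    | cast i => simp only [Fin.snoc_castSucc]; exact proj_affine i
  have hσ : ∀ t : Fin (k'+1), HasDegLE
      (fun y : Fin (m+1) → ZMod p => (Fin.snoc y (1 : ZMod p) : Fin (m + 2) → ZMod p) (e2 t)) 1 :=
    fun t => hσ0 (e2 t)
  have hmem := subst_mem hK1 hP (fun t y => (Fin.snoc y (1 : ZMod p) : Fin (m + 2) → ZMod p) (e2 t)) hσ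
  have heq : (fun y : Fin (m+1) → ZMod p => ∏ t : Fin (k'+1), (Fin.snoc y (1 : ZMod p) : Fin (m + 2) → ZMod p) (e2 t))
      = fun y : Fin (m+1) → ZMod p => ∏ i, y i ^ d i := by
    funext y
    rw [← Finset.prod_fiberwise_of_maps_to' (g := e2)
      (fun t _ => Finset.mem_univ (e2 t))
      (fun v => (Fin.snoc y (1 : ZMod p) : Fin (m + 2) → ZMod p) v)]
    have hfib : ∀ v : Fin (m+2), (∏ _t ∈ Finset.univ.filter (fun t => e2 t = v),
        (Fin.snoc y (1 : ZMod p) : Fin (m + 2) → ZMod p) v)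
          = ((Fin.snoc y (1 : ZMod p) : Fin (m + 2) → ZMod p) v) ^ b v := by
      intro v
      rw [Finset.prod_const, he2 v]
    rw [Finset.prod_congr rfl (fun v _ => hfib v)]
    rw [Fin.prod_univ_castSucc]
    simp only [Fin.snoc_castSucc, Fin.snoc_last, hb, one_pow, mul_one]
  rw [show (⟨m, fun y : Fin (m+1) → ZMod p => ∏ i, y i ^ d i⟩ : OpSig (ZMod p) (ZMod p))
      = ⟨m, fun y : Fin (m+1) → ZMod p => ∏ t : Fin (k'+1), (Fin.snoc y (1 : ZMod p) : Fin (m + 2) → ZMod p) (e2 t)⟩ from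
    congrArg (Sigma.mk m) heq.symm]
  exact hmem

lemma general_mem (hK1 : classComp Kp (affineClass (ZMod p)) ⊆ Kp)
    (hK2 : classComp (affineClass (ZMod p)) Kp ⊆ Kp)
    {n k' : ℕ} {f : (Fin (n+1) → ZMod p) → ZMod p}
    (hf : (⟨n, f⟩ : OpSig (ZMod p) (ZMod p)) ∈ Kp)
    (hP : (⟨k', fun y : Fin (k'+1) → ZMod p => ∏ j, y j⟩ : OpSig (ZMod p) (ZMod p)) ∈ Kp)
    {m : ℕ} {g : (Fin (m+1) → ZMod p) → ZMod p} (hg : HasDegLE g (k'+1)) :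
    (⟨m, g⟩ : OpSig (ZMod p) (ZMod p)) ∈ Kp := by
  classical
  obtain ⟨q, hdeg, heval⟩ := hg
  rcases Finset.eq_empty_or_nonempty q.support with hsupp | hsupp
  · have hg0 : g = fun _ => 0 := by
      funext y
      rw [← heval y, MvPolynomial.support_eq_empty.mp hsupp]
      simp
    rw [show (⟨m, g⟩ : OpSig (ZMod p) (ZMod p)) = ⟨m, fun _ => 0⟩ from
      congrArg (Sigma.mk m) hg0]
    exact const_mem hK1 hK2 hf m 0
  · haveI : Nonempty {d // d ∈ q.support} := Finset.nonempty_coe_sort.mpr hsupp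
    have hmono : ∀ t : {d // d ∈ q.support},
        (⟨m, fun y : Fin (m+1) → ZMod p => ∏ i, y i ^ (t.1 i)⟩
          : OpSig (ZMod p) (ZMod p)) ∈ Kp := by
      intro t
      refine monomial_mem hK1 hP (fun i => t.1 i) ?_
      calc ∑ i, t.1 i = t.1.sum fun _ e => e :=
          (Finsupp.sum_fintype t.1 (fun _ m => m) (fun _ => rfl)).symm
        _ ≤ q.totalDegree := le_totalDegree t.2
        _ ≤ k' + 1 := hdeg
    have hmem := affine_comb_mem' (R := ZMod p) hK2 (ι := {d // d ∈ q.support})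
      (fun t y => ∏ i, y i ^ (t.1 i)) hmono (fun t => coeff t.1 q) 0
    have heq : (fun y : Fin (m+1) → ZMod p =>
        (∑ t : {d // d ∈ q.support}, coeff t.1 q * ∏ i, y i ^ (t.1 i)) + 0) = g := by
      funext y
      rw [add_zero, Finset.sum_coe_sort q.support (fun d => coeff d q * ∏ i, y i ^ d i),
        ← eval_eq', heval]
    rw [show (⟨m, g⟩ : OpSig (ZMod p) (ZMod p))
        = ⟨m, fun y : Fin (m+1) → ZMod p =>
            (∑ t : {d // d ∈ q.support}, coeff t.1 q * ∏ i, y i ^ (t.1 i)) + 0⟩ from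
      congrArg (Sigma.mk m) heq.symm]
    exact hmem

end ZModP

/-! ### The easy direction -/

lemma degClass_comp_affine (k : ℕ) :
    classComp (degClass R k) (affineClass R) ⊆ degClass R k := by
  rintro x ⟨n', m, F, G, hF, hG, rfl⟩
  have := hasDegLE_comp (hF : HasDegLE F k) (fun i => (hG i : HasDegLE (G i) 1))
  rwa [Nat.mul_one] at this

lemma affine_comp_degClass (k : ℕ) :
    classComp (affineClass R) (degClass R k) ⊆ degClass R k := by
  rintro x ⟨n', m, F, G, hF, hG, rfl⟩
  have := hasDegLE_comp (hF : HasDegLE F 1) (fun i => (hG i : HasDegLE (G i) k))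
  rwa [Nat.one_mul] at this

end LClosureAux

/-- Over `GF(p)` with `p` prime: if `f` has degree exactly `k`, then the
smallest `L`-stable class containing `f` is `D_k`. -/
theorem lStableClosure_eq_degClass {p : ℕ} [Fact p.Prime] {n k : ℕ}
    (f : (Fin (n + 1) → ZMod p) → ZMod p)
    (h₁ : HasDegLE f k) (h₂ : ∀ j, HasDegLE f j → k ≤ j) :
    ⋂₀ { K : Set (OpSig (ZMod p) (ZMod p)) |
        (classComp K (affineClass (ZMod p)) ⊆ K ∧
          classComp (affineClass (ZMod p)) K ⊆ K) ∧
        (⟨n, f⟩ : OpSig (ZMod p) (ZMod p)) ∈ K }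
      = degClass (ZMod p) k := by
  classical
  open MvPolynomial Finset LClosureAux in
  apply subset_antisymm
  · intro x hx
    exact hx (degClass (ZMod p) k)
      ⟨⟨LClosureAux.degClass_comp_affine k, LClosureAux.affine_comp_degClass k⟩, h₁⟩
  · rintro ⟨m, g⟩ hg K hK
    obtain ⟨⟨hK1, hK2⟩, hf⟩ := hK
    replace hg : HasDegLE g k := hg
    rcases Nat.eq_zero_or_pos k with hk0 | hkpos
    · subst hk0
      obtain ⟨q, hdeg, heval⟩ := hg
      have hz : ∀ d ∈ q.support, ∀ i, d i = 0 :=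
        (MvPolynomial.totalDegree_eq_zero_iff _ q).mp (Nat.le_zero.mp hdeg)
      have hconst : ∀ y, MvPolynomial.eval y q = MvPolynomial.eval (fun _ => 0) q := by
        intro y
        rw [MvPolynomial.eval_eq', MvPolynomial.eval_eq']
        apply Finset.sum_congr rfl
        intro d hd
        simp [hz d hd]
      have hgc : g = fun _ => MvPolynomial.eval (fun _ => 0) q :=
        funext fun y => by rw [← heval y, hconst y]
      rw [show (⟨m, g⟩ : OpSig (ZMod p) (ZMod p))
          = ⟨m, fun _ => MvPolynomial.eval (fun _ => 0) q⟩ from congrArg (Sigma.mk m) hgc]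
      exact LClosureAux.const_mem hK1 hK2 hf m _
    · obtain ⟨k'', hk''⟩ : ∃ k'', k = k'' + 1 := ⟨k - 1, by omega⟩
      subst hk''
      obtain ⟨q, hdeg, heval⟩ := h₁
      set q₁ := LClosureAux.redPoly p q with hq₁
      have heval₁ : ∀ y, MvPolynomial.eval y q₁ = f y := fun y => by
        rw [hq₁, LClosureAux.eval_redPoly, heval]
      have hdeg₁ : q₁.totalDegree ≤ k'' + 1 :=
        le_trans (LClosureAux.totalDegree_redPoly_le q) hdeg
      have hdeg₁' : q₁.totalDegree = k'' + 1 :=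
        le_antisymm hdeg₁ (h₂ _ ⟨q₁, le_rfl, heval₁⟩)
      have hne : q₁.support.Nonempty := by
        rw [Finset.nonempty_iff_ne_empty]
        intro hemp
        rw [MvPolynomial.support_eq_empty.mp hemp] at hdeg₁'
        simp at hdeg₁'
      obtain ⟨d₀, hd₀mem, hsupeq⟩ :=
        Finset.exists_mem_eq_sup q₁.support hne
          (fun s : Fin (n+1) →₀ ℕ => s.sum fun _ e => e)
      have hd₀sum : (d₀.sum fun _ e => e) = k'' + 1 := by
        rw [← hsupeq]
        exact hdeg₁'.symm ▸ rfl
      have hprod := LClosureAux.prod_mem hK1 hK2 hf q₁ heval₁ hdeg₁ d₀ hd₀mem hd₀sum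
        (LClosureAux.redPoly_exp_le q d₀ hd₀mem)
      exact LClosureAux.general_mem hK1 hK2 hf hprod hg
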